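/- For λ ∈ ℂ* and b ∈ ℂ with b ≠ 1/2, the module Ω(λ, b) over the centerless N=2 superconformal algebra is simple: any nonzero subspace of ℂ[x] ⊕ ℂ[x]‾ closed under all operators L_m, H_m, G^±_m equals the whole space. -/

import Mathlib

open Polynomial

/-- The shift `f(x) ↦ f(x - m)`. -/
noncomputable def shp (m : ℤ) (f : ℂ[X]) : ℂ[X] := f.comp (X - C (m : ℂ))

/-- `L_m·f = -λᵐ(x + m(b-1))f(x-m)` on the first copy, `-λᵐ(x + m(b-1/2))f̄(x-m)` on the bar copy. -/
noncomputable def omL (lam b : ℂ) (m : ℤ) (v : ℂ[X] × ℂ[X]) : ℂ[X] × ℂ[X] :=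
  (-(lam ^ m) • ((X + C ((m : ℂ) * (b - 1))) * shp m v.1),
   -(lam ^ m) • ((X + C ((m : ℂ) * (b - 1/2))) * shp m v.2))

/-- `H_m·f = -2bλᵐf(x-m)`, `H_m·f̄ = (1-2b)λᵐf(x-m)‾`. -/
noncomputable def omH (lam b : ℂ) (m : ℤ) (v : ℂ[X] × ℂ[X]) : ℂ[X] × ℂ[X] :=
  ((-2 * b * lam ^ m) • shp m v.1, ((1 - 2 * b) * lam ^ m) • shp m v.2)

/-- `G⁺_m·f = -2λᵐ(x + (2b-1)m)f(x-m)‾`, `G⁺_m·f̄ = 0`. -/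
noncomputable def omGp (lam b : ℂ) (m : ℤ) (v : ℂ[X] × ℂ[X]) : ℂ[X] × ℂ[X] :=
  (0, (-2 * lam ^ m) • ((X + C ((2 * b - 1) * (m : ℂ))) * shp m v.1))

/-- `G⁻_m·f̄ = λᵐf(x-m)`, `G⁻_m·f = 0`. -/
noncomputable def omGm (lam : ℂ) (m : ℤ) (v : ℂ[X] × ℂ[X]) : ℂ[X] × ℂ[X] :=
  (lam ^ m • shp m v.2, 0)

lemma shp_zero (f : ℂ[X]) : shp 0 f = f := by simp [shp]

lemma shp_zero' : ∀ m : ℤ, shp m (0 : ℂ[X]) = 0 := by intro m; simp [shp]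

lemma natDegree_shp (m : ℤ) (f : ℂ[X]) : (shp m f).natDegree = f.natDegree := by
  rw [shp, natDegree_comp, natDegree_X_sub_C, mul_one]

lemma leadingCoeff_shp (m : ℤ) (f : ℂ[X]) : (shp m f).leadingCoeff = f.leadingCoeff := by
  rw [shp, leadingCoeff_comp (by rw [natDegree_X_sub_C]; exact one_ne_zero)]
  rw [leadingCoeff_X_sub_C, one_pow, mul_one]

lemma shp_sub_ne (h : ℂ[X]) (hd : h.natDegree ≠ 0) : shp 1 h - h ≠ 0 := by
  intro heq
  have hcomp : h.comp (X - C (1:ℂ)) = h := by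
    have := sub_eq_zero.mp heq
    simpa [shp] using this
  set g : ℂ[X] := h - C (h.eval 0) with hg
  have geval : ∀ n : ℕ, h.eval (n : ℂ) = h.eval 0 := by
    intro n
    induction n with
    | zero => simp
    | succ k ihk =>
      have : h.eval ((k + 1 : ℂ) - 1) = h.eval ((k:ℂ) + 1) := by
        conv_rhs => rw [← hcomp]
        simp [eval_comp]
      push_cast
      rw [← ihk]
      simpa using this.symm
  have gne : g ≠ 0 := by
    intro h0
    have : h = C (h.eval 0) := sub_eq_zero.mp h0
    exact hd (by rw [this]; simp)
  have : {x : ℂ | g.IsRoot x}.Infinite := by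
    apply Set.infinite_of_injective_forall_mem (f := fun n : ℕ => (n : ℂ)) Nat.cast_injective
    intro n
    simp only [Set.mem_setOf_eq, IsRoot, hg, eval_sub, eval_C, geval n, sub_self]
  exact gne (eq_zero_of_infinite_isRoot g this)

lemma natDegree_shp_sub_lt (h : ℂ[X]) (hne : shp 1 h - h ≠ 0) :
    (shp 1 h - h).natDegree < h.natDegree := by
  set d := h.natDegree with hd
  have hle : (shp 1 h - h).natDegree ≤ d := by
    refine le_trans (natDegree_sub_le _ _) ?_
    simp [natDegree_shp]
    exact le_of_eq hd.symm
  have hcoeff : (shp 1 h - h).coeff d = 0 := by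
    have h1 : (shp 1 h).coeff d = (shp 1 h).leadingCoeff := by
      rw [leadingCoeff, natDegree_shp]
    rw [coeff_sub, h1, leadingCoeff_shp, hd, leadingCoeff, sub_self]
  rcases lt_or_eq_of_le hle with h' | h'
  · exact h'
  · exfalso
    have := leadingCoeff_ne_zero.mpr hne
    rw [leadingCoeff, h'] at this
    exact this hcoeff

/-- For `λ ≠ 0` and `b ≠ 1/2`, the module `Ω(λ, b)` over the centerless N=2
superconformal algebra is simple: any nonzero subspace of `ℂ[x] ⊕ ℂ[x]‾` closed under
all the operators `L_m, H_m, G^±_m` is the whole space. -/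
theorem stmt19 (lam b : ℂ) (hlam : lam ≠ 0) (hb : b ≠ 1/2)
    (N : Submodule ℂ (ℂ[X] × ℂ[X]))
    (hL : ∀ m : ℤ, ∀ v ∈ N, omL lam b m v ∈ N)
    (hH : ∀ m : ℤ, ∀ v ∈ N, omH lam b m v ∈ N)
    (hGp : ∀ m : ℤ, ∀ v ∈ N, omGp lam b m v ∈ N)
    (hGm : ∀ m : ℤ, ∀ v ∈ N, omGm lam m v ∈ N)
    (hN : N ≠ ⊥) : N = ⊤ := by
  have h2b : (1 : ℂ) - 2 * b ≠ 0 := by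
    intro h; apply hb; field_simp; linear_combination -h
  -- closure of the bar slice under shifts
  have Sshift : ∀ (m : ℤ) (h : ℂ[X]), ((0 : ℂ[X]), h) ∈ N → ((0 : ℂ[X]), shp m h) ∈ N := by
    intro m h hmem
    have h1 := hH m _ hmem
    have hc : ((1 : ℂ) - 2 * b) * lam ^ m ≠ 0 :=
      mul_ne_zero h2b (zpow_ne_zero m hlam)
    have h2 := N.smul_mem (((1 : ℂ) - 2 * b) * lam ^ m)⁻¹ h1
    have he : (((1 : ℂ) - 2 * b) * lam ^ m)⁻¹ • omH lam b m ((0 : ℂ[X]), h)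
        = ((0 : ℂ[X]), shp m h) := by
      simp only [omH, shp_zero', smul_zero, Prod.smul_mk, smul_smul,
        inv_mul_cancel₀ hc, one_smul]
    rwa [he] at h2
  -- closure of the bar slice under multiplication by X
  have SX : ∀ h : ℂ[X], ((0 : ℂ[X]), h) ∈ N → ((0 : ℂ[X]), X * h) ∈ N := by
    intro h hmem
    have h1 := hL 0 _ hmem
    have h2 := N.smul_mem (-1 : ℂ) h1
    have he : (-1 : ℂ) • omL lam b 0 ((0 : ℂ[X]), h) = ((0 : ℂ[X]), X * h) := by
      simp [omL, shp_zero, shp_zero']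
    rwa [he] at h2
  -- from a nonzero element of the bar slice, get the constant 1
  have SC1 : ∀ (d : ℕ) (h : ℂ[X]), h.natDegree = d → h ≠ 0 → ((0 : ℂ[X]), h) ∈ N →
      ((0 : ℂ[X]), (1 : ℂ[X])) ∈ N := by
    intro d
    induction d using Nat.strong_induction_on with
    | _ d ih =>
      intro h hdeg hne hmem
      by_cases h0 : h.natDegree = 0
      · obtain ⟨c, rfl⟩ := natDegree_eq_zero.mp h0
        have hc : c ≠ 0 := by simpa using hne
        have h2 := N.smul_mem c⁻¹ hmem
        have he : c⁻¹ • (((0 : ℂ[X]), C c) : ℂ[X] × ℂ[X]) = ((0 : ℂ[X]), (1 : ℂ[X])) := by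
          simp [Prod.smul_mk, smul_C, smul_eq_mul, inv_mul_cancel₀ hc]
        rwa [he] at h2
      · have hne' : shp 1 h - h ≠ 0 := shp_sub_ne h h0
        have hlt : (shp 1 h - h).natDegree < d := hdeg ▸ natDegree_shp_sub_lt h hne'
        have hmem' : ((0 : ℂ[X]), shp 1 h - h) ∈ N := by
          have := N.sub_mem (Sshift 1 h hmem) hmem
          simpa using this
        exact ih _ hlt _ rfl hne' hmem'
  -- obtain a nonzero element of the bar slice
  obtain ⟨v, hvN, hv0⟩ := (Submodule.ne_bot_iff N).mp hN
  obtain ⟨w, hwN, hw1⟩ : ∃ w ∈ N, w.1 ≠ (0 : ℂ[X]) := by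
    by_cases hf : v.1 = 0
    · refine ⟨omGm lam 0 v, hGm 0 v hvN, ?_⟩
      have : v.2 ≠ 0 := by
        intro h2; apply hv0; exact Prod.ext hf h2
      simpa [omGm, shp_zero] using this
    · exact ⟨v, hvN, hf⟩
  have hbar : ((0 : ℂ[X]), (-2 : ℂ) • (X * w.1)) ∈ N := by
    have h1 := hGp 0 w hwN
    have he : omGp lam b 0 w = ((0 : ℂ[X]), (-2 : ℂ) • (X * w.1)) := by
      simp [omGp, shp_zero]
    rwa [he] at h1
  have hbarne : (-2 : ℂ) • (X * w.1) ≠ 0 := by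
    simp only [ne_eq, smul_eq_zero, mul_eq_zero, X_ne_zero, false_or]
    push_neg
    exact ⟨by norm_num, hw1⟩
  have hone : ((0 : ℂ[X]), (1 : ℂ[X])) ∈ N := SC1 _ _ rfl hbarne hbar
  -- all monomials, then all polynomials, in the bar slice
  have hXn : ∀ n : ℕ, ((0 : ℂ[X]), (X : ℂ[X]) ^ n) ∈ N := by
    intro n
    induction n with
    | zero => simpa using hone
    | succ k ihk =>
      have := SX _ ihk
      rwa [← pow_succ'] at this
  have Sall : ∀ p : ℂ[X], ((0 : ℂ[X]), p) ∈ N := by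
    intro p
    induction p using Polynomial.induction_on' with
    | add p q hp hq =>
      have := N.add_mem hp hq
      simpa using this
    | monomial n a =>
      have := N.smul_mem a (hXn n)
      simpa [smul_X_eq_monomial] using this
  have Fall : ∀ p : ℂ[X], ((p, (0 : ℂ[X])) : ℂ[X] × ℂ[X]) ∈ N := by
    intro p
    have h1 := hGm 0 _ (Sall p)
    have he : omGm lam 0 ((0 : ℂ[X]), p) = ((p, (0 : ℂ[X])) : ℂ[X] × ℂ[X]) := by
      simp [omGm, shp_zero]
    rwa [he] at h1
  rw [eq_top_iff]
  intro u _
  have : u = (u.1, (0 : ℂ[X])) + ((0 : ℂ[X]), u.2) := by simp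
  rw [this]
  exact N.add_mem (Fall u.1) (Sall u.2)
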